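/- arXiv:2004.09306 — 2 statements merged into one kernel-verified Lean document; each statement's English description precedes it below -/
import Mathlib

section
/- The DAG-Wishart distributions form a conjugate family for Gaussian DAG models: if (D,L) has prior density π^{Θ_D}_{U, α(D)} and X₁,…,X_n | (D,L) are i.i.d. N_p(0, (Lᵀ)⁻¹ D L⁻¹), then the posterior density of (D,L) is π^{Θ_D}_{Ũ, α̃(D)} with Ũ = U + nS and α̃_i(D) = n + α_i(D), where S = (1/n) Σᵢ Xᵢ Xᵢᵀ. -/
open Matrix Real MeasureTheory Finset

noncomputable def cholFactor {p : ℕ} (pa : Fin p → Finset (Fin p))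
    (l : ∀ i : Fin p, {j // j ∈ pa i} → ℝ) : Matrix (Fin p) (Fin p) ℝ :=
  fun j i => if j = i then 1 else if h : j ∈ pa i then l i ⟨j, h⟩ else 0

noncomputable def subGT {p : ℕ} (pa : Fin p → Finset (Fin p))
    (U : Matrix (Fin p) (Fin p) ℝ) (i : Fin p) :
    Matrix {j // j ∈ pa i} {j // j ∈ pa i} ℝ :=
  Matrix.of fun a b => U a.1 b.1

noncomputable def subGE {p : ℕ} (pa : Fin p → Finset (Fin p))
    (U : Matrix (Fin p) (Fin p) ℝ) (i : Fin p) :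
    Matrix (Unit ⊕ {j // j ∈ pa i}) (Unit ⊕ {j // j ∈ pa i}) ℝ :=
  Matrix.fromBlocks (Matrix.of fun _ _ => U i i) (Matrix.of fun _ b => U i b.1)
    (Matrix.of fun a _ => U a.1 i) (subGT pa U i)

/-- The normalizing constant `z_D(U, α(D))` of the DAG-Wishart distribution. -/
noncomputable def zDAG {p : ℕ} (pa : Fin p → Finset (Fin p))
    (U : Matrix (Fin p) (Fin p) ℝ) (α : Fin p → ℝ) : ℝ :=
  ∏ i : Fin p,
    Real.Gamma (α i / 2 - ((pa i).card : ℝ) / 2 - 1)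
      * (2 : ℝ) ^ (α i / 2 - 1)
      * Real.sqrt π ^ ((pa i).card)
      * (subGT pa U i).det ^ (α i / 2 - ((pa i).card : ℝ) / 2 - 3 / 2)
      / (subGE pa U i).det ^ (α i / 2 - ((pa i).card : ℝ) / 2 - 1)

/-- The normalized DAG-Wishart density `π^{Θ_D}_{U,α}` at `(D,L) = (diagonal d, cholFactor pa l)`. -/
noncomputable def dagWishartDensity {p : ℕ} (pa : Fin p → Finset (Fin p))
    (U : Matrix (Fin p) (Fin p) ℝ) (α : Fin p → ℝ)
    (d : Fin p → ℝ) (l : ∀ i : Fin p, {j // j ∈ pa i} → ℝ) : ℝ :=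
  (zDAG pa U α)⁻¹
    * Real.exp (-(1 / 2) * Matrix.trace
        ((cholFactor pa l * (Matrix.diagonal d)⁻¹ * (cholFactor pa l).transpose) * U))
    * ∏ i : Fin p, (d i) ^ (-(α i) / 2)

/-- The Gaussian density of `N_p(0, Ω⁻¹)` (precision matrix `Ω`) at `x`. -/
noncomputable def gaussDensity {p : ℕ} (Ω : Matrix (Fin p) (Fin p) ℝ) (x : Fin p → ℝ) : ℝ :=
  (2 * π) ^ (-(p : ℝ) / 2) * Ω.det ^ ((1 : ℝ) / 2)
    * Real.exp (-(1 / 2) * (x ⬝ᵥ (Ω *ᵥ x)))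


lemma sum_extend_mul {m q : Type*} [Fintype m] [DecidableEq m] [Fintype q] [DecidableEq q]
    {f : m → q} (hf : Function.Injective f) (x : m → ℝ) (g : q → ℝ) :
    ∑ j, Function.extend f x 0 j * g j = ∑ a, x a * g (f a) := by
  classical
  calc ∑ j, Function.extend f x 0 j * g j
      = ∑ j ∈ Finset.univ.image f, Function.extend f x 0 j * g j := by
        refine (Finset.sum_subset (Finset.subset_univ _) ?_).symm
        intro j _ hj
        have : Function.extend f x 0 j = 0 := by
          apply Function.extend_apply'
          rintro ⟨a, rfl⟩
          exact hj (Finset.mem_image.2 ⟨a, Finset.mem_univ a, rfl⟩)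
        simp [this]
    _ = ∑ a, Function.extend f x 0 (f a) * g (f a) :=
        Finset.sum_image (fun a _ b _ h => hf h)
    _ = ∑ a, x a * g (f a) := by simp [hf.extend_apply]

lemma posDef_submatrix {m q : Type*} [Fintype m] [DecidableEq m] [Fintype q] [DecidableEq q]
    {U : Matrix q q ℝ} (hU : U.PosDef) (f : m → q) (hf : Function.Injective f) :
    (U.submatrix f f).PosDef := by
  rw [posDef_iff_dotProduct_mulVec]
  constructor
  · exact hU.isHermitian.submatrix f
  · intro x hx
    have hyne : Function.extend f x 0 ≠ 0 := by
      intro h0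
      apply hx
      funext a
      have := congrFun h0 (f a)
      rwa [hf.extend_apply] at this
    have key : star x ⬝ᵥ ((U.submatrix f f) *ᵥ x)
        = star (Function.extend f x 0) ⬝ᵥ (U *ᵥ (Function.extend f x 0)) := by
      simp only [star_trivial, dotProduct, mulVec]
      rw [sum_extend_mul hf x (fun j => ∑ j', U j j' * Function.extend f x 0 j')]
      apply Finset.sum_congr rfl
      intro a _
      congr 1
      calc ∑ j, U.submatrix f f a j * x j
          = ∑ j, x j * U (f a) (f j) := by
            simp [submatrix_apply, mul_comm]
        _ = ∑ j, Function.extend f x 0 j * U (f a) j :=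
            (sum_extend_mul hf x (fun j => U (f a) j)).symm
        _ = ∑ j, U (f a) j * Function.extend f x 0 j := by
            simp [mul_comm]
    rw [key]
    exact hU.dotProduct_mulVec_pos hyne

lemma subGT_posDef {p : ℕ} (pa : Fin p → Finset (Fin p))
    {U : Matrix (Fin p) (Fin p) ℝ} (hU : U.PosDef) (i : Fin p) :
    (subGT pa U i).PosDef := by
  have : subGT pa U i = U.submatrix (fun a : {j // j ∈ pa i} => a.1) (fun a => a.1) := rfl
  rw [this]
  exact posDef_submatrix hU _ Subtype.val_injective

lemma subGE_posDef {p : ℕ} (pa : Fin p → Finset (Fin p))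
    (hpa : ∀ i : Fin p, ∀ j ∈ pa i, i < j)
    {U : Matrix (Fin p) (Fin p) ℝ} (hU : U.PosDef) (i : Fin p) :
    (subGE pa U i).PosDef := by
  have : subGE pa U i = U.submatrix (Sum.elim (fun _ : Unit => i) (fun a => a.1))
      (Sum.elim (fun _ : Unit => i) (fun a => a.1)) := by
    ext x y
    cases x <;> cases y <;> rfl
  rw [this]
  apply posDef_submatrix hU
  rintro (a | a) (b | b) h
  · rfl
  · simp only [Sum.elim_inl, Sum.elim_inr] at h
    have hb := hpa i b.1 b.2
    rw [← h] at hb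
    exact absurd hb (lt_irrefl i)
  · simp only [Sum.elim_inl, Sum.elim_inr] at h
    have ha := hpa i a.1 a.2
    rw [h] at ha
    exact absurd ha (lt_irrefl i)
  · exact congrArg Sum.inr (Subtype.ext h)

lemma det_cholFactor {p : ℕ} (pa : Fin p → Finset (Fin p))
    (hpa : ∀ i : Fin p, ∀ j ∈ pa i, i < j)
    (l : ∀ i : Fin p, {j // j ∈ pa i} → ℝ) : (cholFactor pa l).det = 1 := by
  rw [Matrix.det_of_lowerTriangular]
  · simp [cholFactor]
  · intro a b hab
    have hab' : (a : Fin p) < b := hab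
    simp only [cholFactor]
    rw [if_neg (by omega : ¬ a = b), dif_neg (fun h => by have := hpa b a h; omega)]

lemma outer_posSemidef {p : ℕ} (x : Fin p → ℝ) :
    (Matrix.of fun i j => x i * x j : Matrix (Fin p) (Fin p) ℝ).PosSemidef := by
  rw [posSemidef_iff_dotProduct_mulVec]
  constructor
  · ext i j; simp [Matrix.IsHermitian, mul_comm]
  · intro z
    have : star z ⬝ᵥ ((Matrix.of fun i j => x i * x j) *ᵥ z) = (x ⬝ᵥ z) ^ 2 := by
      simp only [star_trivial, dotProduct, mulVec, Matrix.of_apply, sq, Finset.sum_mul,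
        Finset.mul_sum]
      rw [Finset.sum_comm]
      apply Finset.sum_congr rfl; intro i _
      apply Finset.sum_congr rfl; intro j _
      ring
    rw [this]
    positivity

lemma trace_mul_outer {p : ℕ} (Ω : Matrix (Fin p) (Fin p) ℝ) (x : Fin p → ℝ) :
    Matrix.trace (Ω * Matrix.of fun i j => x i * x j) = x ⬝ᵥ (Ω *ᵥ x) := by
  simp only [Matrix.trace, Matrix.diag, Matrix.mul_apply, Matrix.of_apply, dotProduct, mulVec,
    Finset.mul_sum]
  apply Finset.sum_congr rfl; intro i _
  apply Finset.sum_congr rfl; intro j _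
  ring

lemma zDAG_pos {p : ℕ} (pa : Fin p → Finset (Fin p))
    (hpa : ∀ i : Fin p, ∀ j ∈ pa i, i < j)
    {U : Matrix (Fin p) (Fin p) ℝ} (hU : U.PosDef)
    (α : Fin p → ℝ) (hα : ∀ i, 2 < α i - ((pa i).card : ℝ)) :
    0 < zDAG pa U α := by
  apply Finset.prod_pos
  intro i _
  apply div_pos
  · apply mul_pos
    apply mul_pos
    apply mul_pos
    · exact Real.Gamma_pos_of_pos (by have := hα i; linarith)
    · exact Real.rpow_pos_of_pos two_pos _
    · exact pow_pos (Real.sqrt_pos.2 Real.pi_pos) _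
    · exact Real.rpow_pos_of_pos (subGT_posDef pa hU i).det_pos _
  · exact Real.rpow_pos_of_pos (subGE_posDef pa hpa hU i).det_pos _

set_option maxHeartbeats 1000000 in

/-- Conjugacy of the DAG-Wishart family for Gaussian DAG models: if `(D,L)` has prior density
`π^{Θ_D}_{U,α}` and `X₁,…,X_n | (D,L)` are i.i.d. `N_p(0, (Lᵀ)⁻¹ D L⁻¹)`, then the posterior
density of `(D,L)` is `π^{Θ_D}_{Ũ,α̃}` with `Ũ = U + nS`, `α̃ᵢ = n + αᵢ`, `S = n⁻¹ Σᵢ XᵢXᵢᵀ`;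
i.e. prior times likelihood is proportional (in `(D,L)`, with a constant depending only on the
data) to the updated DAG-Wishart density. -/
theorem dagWishart_conjugacy {p n : ℕ}
    (pa : Fin p → Finset (Fin p)) (hpa : ∀ i : Fin p, ∀ j ∈ pa i, i < j)
    (U : Matrix (Fin p) (Fin p) ℝ) (hU : U.PosDef)
    (α : Fin p → ℝ) (hα : ∀ i, 2 < α i - ((pa i).card : ℝ))
    (X : Fin n → (Fin p → ℝ)) (hn : 0 < n) :
    ∃ C : ℝ, 0 < C ∧
      ∀ (d : Fin p → ℝ) (l : ∀ i : Fin p, {j // j ∈ pa i} → ℝ), (∀ i, 0 < d i) →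
        dagWishartDensity pa U α d l
            * ∏ k : Fin n,
                gaussDensity
                  (cholFactor pa l * (Matrix.diagonal d)⁻¹ * (cholFactor pa l).transpose)
                  (X k)
          = C * dagWishartDensity pa
              (U + (n : ℝ) • ((n : ℝ)⁻¹ • ∑ k : Fin n, Matrix.of fun i j => X k i * X k j))
              (fun i => (n : ℝ) + α i) d l := by
  classical
  set T : Matrix (Fin p) (Fin p) ℝ := ∑ k : Fin n, Matrix.of fun i j => X k i * X k j with hTdef
  have hnR : ((n : ℝ)) ≠ 0 := Nat.cast_ne_zero.2 hn.ne'
  have hT : (n : ℝ) • ((n : ℝ)⁻¹ • T) = T := by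
    rw [smul_smul, mul_inv_cancel₀ hnR, one_smul]
  have hTpsd : T.PosSemidef := by
    rw [hTdef]
    apply Finset.sum_induction _ _ (fun a b ha hb => ha.add hb) Matrix.PosSemidef.zero
    intro k _
    exact outer_posSemidef (X k)
  have hUT : (U + T).PosDef := hU.add_posSemidef hTpsd
  have hz1 : 0 < zDAG pa U α := zDAG_pos pa hpa hU α hα
  have hz2 : 0 < zDAG pa (U + T) (fun i => (n : ℝ) + α i) :=
    zDAG_pos pa hpa hUT _ (fun i => by have := hα i; have : (0:ℝ) ≤ n := Nat.cast_nonneg n; linarith)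
  refine ⟨((2 * π) ^ (-(p : ℝ) / 2)) ^ n * zDAG pa (U + T) (fun i => (n : ℝ) + α i)
      / zDAG pa U α, ?_, ?_⟩
  · apply div_pos (mul_pos (pow_pos (Real.rpow_pos_of_pos (by positivity) _) n) hz2) hz1
  · intro d l hd
    rw [hT]
    unfold dagWishartDensity gaussDensity
    have hdetL := det_cholFactor pa hpa l
    set L := cholFactor pa l with hL
    set Ω := L * (Matrix.diagonal d)⁻¹ * L.transpose with hΩ
    have hdpos : 0 < ∏ i, d i := Finset.prod_pos (fun i _ => hd i)
    have hdet : Ω.det = (∏ i, d i)⁻¹ := by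
      rw [hΩ, det_mul, det_mul, det_transpose, hdetL, det_nonsing_inv, det_diagonal,
        Ring.inverse_eq_inv]
      ring
    have hΩdetpos : 0 < Ω.det := by rw [hdet]; positivity
    have hq : ∑ k : Fin n, (-(1/2) * (X k ⬝ᵥ Ω *ᵥ X k)) = -(1/2) * Matrix.trace (Ω * T) := by
      rw [hTdef, Matrix.mul_sum, Matrix.trace_sum, Finset.mul_sum]
      exact Finset.sum_congr rfl fun k _ => by rw [trace_mul_outer]
    have htr : Matrix.trace (Ω * (U + T)) = Matrix.trace (Ω * U) + Matrix.trace (Ω * T) := by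
      rw [mul_add, Matrix.trace_add]
    have hpow : (Ω.det ^ ((1:ℝ)/2)) ^ n = ∏ i, d i ^ (-(n : ℝ) / 2) := by
      rw [← Real.rpow_natCast (Ω.det ^ ((1:ℝ)/2)) n, ← Real.rpow_mul hΩdetpos.le, hdet,
        Real.inv_rpow hdpos.le, ← Real.rpow_neg_one ((∏ i, d i) ^ ((1:ℝ)/2 * n)),
        ← Real.rpow_mul hdpos.le,
        ← Real.finset_prod_rpow _ _ (fun i _ => (hd i).le)]
      refine Finset.prod_congr rfl fun i _ => ?_
      congr 1
      ring
    have hsplit : ∀ i : Fin p, d i ^ (-((n : ℝ) + α i) / 2)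
        = d i ^ (-(n : ℝ) / 2) * d i ^ (-(α i) / 2) := by
      intro i
      rw [← Real.rpow_add (hd i)]
      ring_nf
    rw [Finset.prod_mul_distrib, Finset.prod_mul_distrib, Finset.prod_const, Finset.prod_const,
      ← Real.exp_sum, hq, htr]
    rw [show (-(1/2) * (Matrix.trace (Ω * U) + Matrix.trace (Ω * T)))
        = -(1/2) * Matrix.trace (Ω * U) + -(1/2) * Matrix.trace (Ω * T) by ring, Real.exp_add]
    rw [show (∏ i : Fin p, d i ^ (-((n : ℝ) + α i) / 2))
        = (∏ i : Fin p, d i ^ (-(n : ℝ) / 2)) * ∏ i : Fin p, d i ^ (-(α i) / 2) by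
      rw [← Finset.prod_mul_distrib]; exact Finset.prod_congr rfl fun i _ => hsplit i]
    rw [Finset.card_univ, Fintype.card_fin, hpow]
    field_simp
end

section
/- The DAG-Wishart density factorizes across columns: π^{Θ_D}_{U,α(D)}(D,L) = ∏_{i=1}^p f_i(D_ii, L^>_{D.i}), where for each i, conditionally on D_ii, the vector L^>_{D.i} = (L_ji)_{j∈pa_i(D)} is multivariate normal with covariance D_ii (U_D^{>i})⁻¹ and mean −(U_D^{>i})⁻¹ U^>_{D.i}, and D_ii follows an inverse-gamma-type distribution. -/
open Matrix Real Finset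

/-- The vector `U^>_{D.i} = (U_ji)_{j ∈ pa_i(D)}`. -/
noncomputable def subVec {p : ℕ} (pa : Fin p → Finset (Fin p))
    (U : Matrix (Fin p) (Fin p) ℝ) (i : Fin p) : {j // j ∈ pa i} → ℝ :=
  fun a => U a.1 i

lemma posDef_submatrix_s15 {n m : Type*} [Fintype n] [Fintype m] [DecidableEq n] [DecidableEq m]
    {M : Matrix n n ℝ} (hM : M.PosDef) (e : m → n) (he : Function.Injective e) :
    (M.submatrix e e).PosDef := by
  classical
  refine Matrix.PosDef.of_dotProduct_mulVec_pos ?_ ?_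
  · exact hM.1.submatrix e
  · intro x hx
    set y : n → ℝ := Function.extend e x 0 with hy
    have hyx : ∀ a, y (e a) = x a := fun a => he.extend_apply x 0 a
    have hy0 : ∀ j, j ∉ Set.range e → y j = 0 := fun j hj => by
      simp [hy, Function.extend_apply' _ _ _ (by simpa using hj)]
    have hyne : y ≠ 0 := by
      intro h
      apply hx
      funext a
      have := congrFun h (e a)
      simpa [hyx a] using this
    have hsum : ∀ (g : n → ℝ), ∑ k, y k * g k = ∑ a, x a * g (e a) := by
      intro g
      rw [← Finset.sum_subset (Finset.subset_univ (Finset.univ.image e))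
        (fun j _ hj => by
          rw [hy0 j (by simpa [Finset.mem_image] using hj), zero_mul])]
      rw [Finset.sum_image (fun a _ b _ h => he h)]
      simp [hyx]
    have key : star x ⬝ᵥ (M.submatrix e e *ᵥ x) = star y ⬝ᵥ (M *ᵥ y) := by
      simp only [dotProduct, Matrix.mulVec, Matrix.submatrix_apply, star_trivial]
      rw [hsum fun j => ∑ k, M j k * y k]
      apply Finset.sum_congr rfl
      intro a _
      congr 1
      rw [show ∀ j, (∑ k, M j k * y k) = ∑ k, y k * M j k from
        fun j => by simp [mul_comm], hsum fun k => M (e a) k]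
      simp [mul_comm]
    rw [key]
    exact hM.dotProduct_mulVec_pos hyne

/-- Column-wise factorization of the DAG-Wishart density.  With `L = cholFactor pa l` and
`D = diagonal d`:
(i) the quadratic expansion
`tr(L D⁻¹ Lᵀ U) = Σᵢ dᵢ⁻¹ [Uᵢᵢ + 2 (L^>ᵢ)ᵀ U^>ᵢ + (L^>ᵢ)ᵀ U^{>i} L^>ᵢ]`;
(ii) consequently the density factorizes across columns as
`exp(−½ tr(L D⁻¹ Lᵀ U)) ∏ᵢ dᵢ^{−αᵢ/2} = ∏ᵢ fᵢ(dᵢ, lᵢ)`; and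
(iii) completing the square: the `i`-th factor's exponent is, up to the inverse-gamma part in
`dᵢ`, the kernel of a multivariate normal for `lᵢ` with mean `−(U^{>i})⁻¹ U^>ᵢ` and
covariance `dᵢ (U^{>i})⁻¹`. -/
theorem dagWishart_columnwise_factorization {p : ℕ}
    (pa : Fin p → Finset (Fin p)) (hpa : ∀ i : Fin p, ∀ j ∈ pa i, i < j)
    (U : Matrix (Fin p) (Fin p) ℝ) (hU : U.PosDef)
    (α : Fin p → ℝ)
    (d : Fin p → ℝ) (hd : ∀ i, 0 < d i)
    (l : ∀ i : Fin p, {j // j ∈ pa i} → ℝ) :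
    Matrix.trace ((cholFactor pa l * (Matrix.diagonal d)⁻¹ * (cholFactor pa l).transpose) * U)
      = ∑ i : Fin p, (d i)⁻¹
          * (U i i + 2 * (l i ⬝ᵥ subVec pa U i) + l i ⬝ᵥ (subGT pa U i *ᵥ l i)) ∧
    Real.exp (-(1 / 2) * Matrix.trace
        ((cholFactor pa l * (Matrix.diagonal d)⁻¹ * (cholFactor pa l).transpose) * U))
      * ∏ i : Fin p, (d i) ^ (-(α i) / 2)
      = ∏ i : Fin p,
          (d i) ^ (-(α i) / 2)
            * Real.exp (-(1 / (2 * d i))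
                * (U i i + 2 * (l i ⬝ᵥ subVec pa U i) + l i ⬝ᵥ (subGT pa U i *ᵥ l i))) ∧
    ∀ i : Fin p,
      U i i + 2 * (l i ⬝ᵥ subVec pa U i) + l i ⬝ᵥ (subGT pa U i *ᵥ l i)
        = (l i + (subGT pa U i)⁻¹ *ᵥ subVec pa U i)
              ⬝ᵥ (subGT pa U i *ᵥ (l i + (subGT pa U i)⁻¹ *ᵥ subVec pa U i))
          + (U i i - subVec pa U i ⬝ᵥ ((subGT pa U i)⁻¹ *ᵥ subVec pa U i)) := by
  classical
  have hUs : ∀ i j : Fin p, U j i = U i j := fun i j => by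
    simpa using hU.1.apply i j
  have hnotmem : ∀ k : Fin p, k ∉ pa k := fun k hk => lt_irrefl k (hpa k k hk)
  -- column-sum decomposition
  have colsum : ∀ (k : Fin p) (g : Fin p → ℝ),
      (∑ j, cholFactor pa l j k * g j)
        = g k + ∑ a : {j // j ∈ pa k}, l k a * g a.1 := by
    intro k g
    rw [← Finset.sum_subset (Finset.subset_univ (insert k (pa k)))
      (fun j _ hj => by
        simp only [Finset.mem_insert, not_or] at hj
        simp [cholFactor, hj.1, hj.2])]
    rw [Finset.sum_insert (hnotmem k)]
    congr 1
    · simp [cholFactor]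
    · rw [← Finset.sum_attach (pa k) (fun j => cholFactor pa l j k * g j),
        Finset.univ_eq_attach]
      apply Finset.sum_congr rfl
      intro a _
      have hne : a.1 ≠ k := fun h => hnotmem k (by have h2 := a.2; rwa [h] at h2)
      simp [cholFactor, hne, a.2]
  -- per-column quadratic form
  have quad : ∀ k : Fin p,
      (∑ i, ∑ j, cholFactor pa l i k * cholFactor pa l j k * U j i)
        = U k k + 2 * (l k ⬝ᵥ subVec pa U k) + l k ⬝ᵥ (subGT pa U k *ᵥ l k) := by
    intro k
    have h1 : ∀ i, (∑ j, cholFactor pa l i k * cholFactor pa l j k * U j i)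
        = cholFactor pa l i k * (U k i + ∑ a : {j // j ∈ pa k}, l k a * U a.1 i) := by
      intro i
      rw [← colsum k (fun j => U j i), Finset.mul_sum]
      exact Finset.sum_congr rfl fun j _ => by ring
    simp only [h1]
    rw [colsum k (fun i => U k i + ∑ a : {j // j ∈ pa k}, l k a * U a.1 i)]
    have expand : (∑ a : {j // j ∈ pa k}, l k a * (U k a.1 + ∑ b : {j // j ∈ pa k}, l k b * U b.1 a.1))
        = (∑ a : {j // j ∈ pa k}, l k a * U a.1 k)
          + ∑ a : {j // j ∈ pa k}, l k a * ∑ b : {j // j ∈ pa k}, U a.1 b.1 * l k b := by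
      rw [← Finset.sum_add_distrib]
      apply Finset.sum_congr rfl
      intro a _
      rw [mul_add, hUs a.1 k]
      congr 2
      exact Finset.sum_congr rfl fun b _ => by rw [hUs a.1 b.1]; ring
    rw [expand]
    simp only [dotProduct, subVec, subGT, Matrix.mulVec, Matrix.of_apply]
    ring
  -- trace identity
  have hdinv : (Matrix.diagonal d)⁻¹ = Matrix.diagonal (fun i => (d i)⁻¹) := by
    apply Matrix.inv_eq_right_inv
    rw [Matrix.diagonal_mul_diagonal]
    have h1 : (fun i => d i * (d i)⁻¹) = fun _ : Fin p => (1:ℝ) :=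
      funext fun i => mul_inv_cancel₀ (hd i).ne'
    rw [h1]
    exact Matrix.diagonal_one
  have swap : ∀ (f : Fin p → Fin p → Fin p → ℝ),
      (∑ i : Fin p, ∑ j : Fin p, ∑ k : Fin p, f i j k) = ∑ k, ∑ i, ∑ j, f i j k := by
    intro f
    have h : ∀ i, (∑ j : Fin p, ∑ k : Fin p, f i j k) = ∑ k, ∑ j, f i j k :=
      fun i => Finset.sum_comm
    simp only [h]
    exact Finset.sum_comm
  have htrace : Matrix.trace ((cholFactor pa l * (Matrix.diagonal d)⁻¹ * (cholFactor pa l).transpose) * U)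
      = ∑ i : Fin p, (d i)⁻¹
          * (U i i + 2 * (l i ⬝ᵥ subVec pa U i) + l i ⬝ᵥ (subGT pa U i *ᵥ l i)) := by
    rw [hdinv]
    have hent : ∀ i j : Fin p,
        (cholFactor pa l * Matrix.diagonal (fun t => (d t)⁻¹) * (cholFactor pa l)ᵀ) i j
          = ∑ k, cholFactor pa l i k * (d k)⁻¹ * cholFactor pa l j k := by
      intro i j
      rw [Matrix.mul_apply]
      apply Finset.sum_congr rfl
      intro k _
      rw [Matrix.mul_diagonal, Matrix.transpose_apply]
    have htr : Matrix.trace ((cholFactor pa l * Matrix.diagonal (fun t => (d t)⁻¹)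
          * (cholFactor pa l)ᵀ) * U)
        = ∑ i, ∑ j, (∑ k, cholFactor pa l i k * (d k)⁻¹ * cholFactor pa l j k) * U j i := by
      rw [Matrix.trace]
      apply Finset.sum_congr rfl
      intro i _
      rw [Matrix.diag_apply, Matrix.mul_apply]
      exact Finset.sum_congr rfl fun j _ => by rw [hent]
    rw [htr]
    simp only [Finset.sum_mul]
    rw [swap (fun i j k => cholFactor pa l i k * (d k)⁻¹ * cholFactor pa l j k * U j i)]
    apply Finset.sum_congr rfl
    intro k _
    rw [← quad k, Finset.mul_sum]
    apply Finset.sum_congr rfl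
    intro i _
    rw [Finset.mul_sum]
    exact Finset.sum_congr rfl fun j _ => by ring
  refine ⟨htrace, ?_, ?_⟩
  · rw [htrace, Finset.mul_sum, Real.exp_sum, ← Finset.prod_mul_distrib]
    apply Finset.prod_congr rfl
    intro i _
    have hne := (hd i).ne'
    have h2 : -(1 / (2 * d i)) * (U i i + 2 * (l i ⬝ᵥ subVec pa U i)
          + l i ⬝ᵥ (subGT pa U i *ᵥ l i))
        = -(1/2 : ℝ) * ((d i)⁻¹ * (U i i + 2 * (l i ⬝ᵥ subVec pa U i)
          + l i ⬝ᵥ (subGT pa U i *ᵥ l i))) := by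
      have h3 : (1:ℝ) / (2 * d i) = 1/2 * (d i)⁻¹ := by field_simp
      rw [h3]; ring
    rw [h2, mul_comm]
  · intro i
    set A := subGT pa U i with hA
    set v := subVec pa U i with hv
    have hApd : A.PosDef := posDef_submatrix_s15 hU (Subtype.val) Subtype.val_injective
    have hAinv : A * A⁻¹ = 1 :=
      Matrix.mul_nonsing_inv A (isUnit_iff_ne_zero.mpr hApd.det_pos.ne')
    have hAm : A *ᵥ (A⁻¹ *ᵥ v) = v := by
      rw [Matrix.mulVec_mulVec, hAinv, Matrix.one_mulVec]
    have hAsymm : Aᵀ = A := by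
      ext a b
      exact hUs a.1 b.1
    set m := A⁻¹ *ᵥ v with hm
    have hmAx : ∀ x : {j // j ∈ pa i} → ℝ, m ⬝ᵥ (A *ᵥ x) = x ⬝ᵥ v := by
      intro x
      rw [Matrix.dotProduct_mulVec, ← hAsymm, Matrix.vecMul_transpose, hAm, dotProduct_comm]
    rw [Matrix.mulVec_add, hAm, dotProduct_add, add_dotProduct, add_dotProduct,
      hmAx (l i), dotProduct_comm m v]
    have hmv : m ⬝ᵥ v = v ⬝ᵥ m := dotProduct_comm m v
    ring
end
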